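/- If a fee sharing function satisfies ∑_{i=1}^k f_i^k = F, f_i^k ≥ 0, and f_i^k ≥ f_i^{k+1} + f_{i+1}^{k+1} for all 1 ≤ i ≤ k, then f_i^k = 0 for all 1 < i < k; i.e., all intermediary nodes other than the first receive zero reward. -/

import Mathlib

theorem stmt_1 (F : ℝ) (hF : 0 < F) (f : ℕ → ℕ → ℝ)
    (hsum : ∀ k : ℕ, 1 ≤ k → ∑ i ∈ Finset.Icc 1 k, f k i = F)
    (hnonneg : ∀ k i : ℕ, 0 ≤ f k i)
    (hsybil : ∀ k : ℕ, 1 ≤ k → ∀ i : ℕ, 1 ≤ i → i ≤ k →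
      f k i ≥ f (k+1) i + f (k+1) (i+1)) :
    ∀ k i : ℕ, 1 < i → i < k → f k i = 0 := by
  intro k i hi hik
  obtain ⟨m, rfl⟩ : ∃ m, k = m + 1 := ⟨k - 1, by omega⟩
  have hm : 1 ≤ m := by omega
  have key : ∑ j ∈ Finset.Icc 2 m, f (m+1) j ≤ 0 := by
    have h1 : ∑ j ∈ Finset.Icc 1 m, f m j = F := hsum m hm
    have h2 : ∑ j ∈ Finset.Icc 1 (m+1), f (m+1) j = F := hsum (m+1) (by omega)
    have h3 : ∑ j ∈ Finset.Icc 1 m, (f (m+1) j + f (m+1) (j+1)) ≤ F := by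
      rw [← h1]
      apply Finset.sum_le_sum
      intro j hj
      simp only [Finset.mem_Icc] at hj
      exact hsybil m hm j hj.1 hj.2
    rw [Finset.sum_add_distrib] at h3
    have hA : ∑ j ∈ Finset.Icc 1 m, f (m+1) j + f (m+1) (m+1) = F := by
      rw [← Finset.sum_Icc_succ_top (by omega : 1 ≤ m + 1)]; exact h2
    have hshift : ∑ j ∈ Finset.Icc 1 m, f (m+1) (j+1)
        = ∑ j ∈ Finset.Icc 2 (m+1), f (m+1) j := by
      have hmap : Finset.Icc 2 (m+1) = Finset.map (addRightEmbedding 1) (Finset.Icc 1 m) := by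
        rw [Finset.map_add_right_Icc]
      rw [hmap, Finset.sum_map]
      rfl
    have hB : ∑ j ∈ Finset.Icc 2 (m+1), f (m+1) j
        = ∑ j ∈ Finset.Icc 2 m, f (m+1) j + f (m+1) (m+1) := by
      rw [← Finset.sum_Icc_succ_top (by omega : 2 ≤ m + 1)]
    rw [hshift, hB] at h3
    linarith
  have hzero := (Finset.sum_eq_zero_iff_of_nonneg
    (fun j _ => hnonneg (m+1) j)).mp
    (le_antisymm key (Finset.sum_nonneg fun j _ => hnonneg (m+1) j))
  exact hzero i (Finset.mem_Icc.mpr ⟨by omega, by omega⟩)
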